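/- Let K > 0, G > 0, η > 0, δ > 0, and ν ∈ (0, 1). Let Φ denote the cumulative distribution function of the standard real Gaussian distribution N(0, 1), and let q < 0 be the number satisfying Φ(q) = (1 − ν/2)/2. Define T₁ = (1/(2K))·log( (2K η^{-1} δ²)/(q² G²) + 1 ). Then for every T ≥ T₁, if Z is a real Gaussian random variable with mean 0 and variance σ²(T) = (G²/(2K))·(e^{2KT} − 1), we have ℙ(Z² ≥ η^{-1} δ²) ≥ 1 − ν. -/

import Mathlib

open MeasureTheory ProbabilityTheory

/-- Proposition 4.7 of the paper (escape from saddle points): let `Φ` be the standard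
Gaussian CDF and `q < 0` with `Φ(q) = (1 − ν/2)/2`. With
`T₁ = (1/(2K)) log(2Kη⁻¹δ²/(q²G²) + 1)`, for every `T ≥ T₁` a centered Gaussian with
variance `σ²(T) = (G²/(2K))(e^{2KT} − 1)` satisfies `ℙ(Z² ≥ η⁻¹δ²) ≥ 1 − ν`. -/
theorem saddle_escape_time (K G η δ ν : ℝ)
    (hK : 0 < K) (hG : 0 < G) (hη : 0 < η) (hδ : 0 < δ) (hν : ν ∈ Set.Ioo (0 : ℝ) 1)
    (q : ℝ) (hq : q < 0) (hΦ : cdf (gaussianReal 0 1) q = (1 - ν / 2) / 2) :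
    ∀ T : ℝ, (1 / (2 * K)) * Real.log (2 * K * η⁻¹ * δ ^ 2 / (q ^ 2 * G ^ 2) + 1) ≤ T →
      ENNReal.ofReal (1 - ν) ≤
        gaussianReal 0
            (Real.toNNReal ((G ^ 2 / (2 * K)) * (Real.exp (2 * K * T) - 1)))
            {x : ℝ | η⁻¹ * δ ^ 2 ≤ x ^ 2} := by
  intro T hT
  obtain ⟨hν0, hν1⟩ := hν
  set a : ℝ := η⁻¹ * δ ^ 2 with ha_def
  have ha : 0 < a := by rw [ha_def]; positivity
  have hq2 : 0 < q ^ 2 := pow_two_pos_of_ne_zero hq.ne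
  set v : ℝ := G ^ 2 / (2 * K) * (Real.exp (2 * K * T) - 1) with hv_def
  have h2K : (0 : ℝ) < 2 * K := by linarith
  have hargpos : (0:ℝ) < 2 * K * η⁻¹ * δ ^ 2 / (q ^ 2 * G ^ 2) := by positivity
  have hexp : 2 * K * η⁻¹ * δ ^ 2 / (q ^ 2 * G ^ 2) + 1 ≤ Real.exp (2 * K * T) := by
    rw [← Real.exp_log (by linarith :
        (0:ℝ) < 2 * K * η⁻¹ * δ ^ 2 / (q ^ 2 * G ^ 2) + 1)]
    apply Real.exp_le_exp.mpr
    have := mul_le_mul_of_nonneg_left hT h2K.le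
    calc Real.log (2 * K * η⁻¹ * δ ^ 2 / (q ^ 2 * G ^ 2) + 1)
        = 2 * K * ((1 / (2 * K)) *
            Real.log (2 * K * η⁻¹ * δ ^ 2 / (q ^ 2 * G ^ 2) + 1)) := by
          field_simp
      _ ≤ 2 * K * T := this
  have hkey : a ≤ q ^ 2 * v := by
    have h1 : q ^ 2 * (G ^ 2 / (2 * K) * (2 * K * a / (q ^ 2 * G ^ 2))) = a := by
      field_simp
      ring_nf
      exact mul_inv_cancel₀ hq.ne
    have h2 : 2 * K * a / (q ^ 2 * G ^ 2) ≤ Real.exp (2 * K * T) - 1 := by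
      have : 2 * K * η⁻¹ * δ ^ 2 / (q ^ 2 * G ^ 2) = 2 * K * a / (q ^ 2 * G ^ 2) := by
        rw [ha_def]; ring_nf
      linarith [hexp, this.symm.le, this.le]
    rw [hv_def, ← h1]
    have hc : (0:ℝ) ≤ q ^ 2 * (G ^ 2 / (2 * K)) := by positivity
    nlinarith [mul_le_mul_of_nonneg_left h2 hc]
  have hv : 0 < v := by nlinarith
  set s : ℝ := Real.sqrt v with hs_def
  have hs : 0 < s := Real.sqrt_pos.mpr hv
  have hs2 : s ^ 2 = v := Real.sq_sqrt hv.le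
  have hmeas : MeasurableSet {x : ℝ | a ≤ x ^ 2} :=
    measurableSet_le measurable_const (measurable_id.pow_const 2)
  have hmap : gaussianReal 0 (Real.toNNReal v) = (gaussianReal 0 1).map (s * ·) := by
    rw [gaussianReal_map_const_mul]
    congr 1
    · simp
    · rw [mul_one]
      ext
      simp [Real.coe_toNNReal v hv.le, hs2]
  rw [hmap, Measure.map_apply (measurable_const_mul s) hmeas]
  have hsub : Set.Iic q ∪ Set.Ici (-q) ⊆ (s * ·) ⁻¹' {x : ℝ | a ≤ x ^ 2} := by
    intro x hx
    simp only [Set.mem_preimage, Set.mem_setOf_eq]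
    have hx2 : q ^ 2 ≤ x ^ 2 := by
      rcases hx with h | h
      · have : x ≤ q := h
        nlinarith
      · have : -q ≤ x := h
        nlinarith
    calc a ≤ q ^ 2 * v := hkey
      _ ≤ x ^ 2 * v := by nlinarith
      _ = (s * x) ^ 2 := by rw [← hs2]; ring
  refine le_trans ?_ (measure_mono hsub)
  have hdisj : Disjoint (Set.Iic q) (Set.Ici (-q)) := by
    apply Set.Iic_disjoint_Ici.mpr
    linarith
  rw [measure_union hdisj measurableSet_Ici]
  have hIic : (gaussianReal 0 1) (Set.Iic q) = ENNReal.ofReal ((1 - ν / 2) / 2) := by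
    rw [← ofReal_cdf, hΦ]
  have hneg : (gaussianReal 0 1).map (fun x : ℝ => -x) = gaussianReal 0 1 := by
    have h := gaussianReal_map_const_mul (μ := 0) (v := 1) (-1 : ℝ)
    have he : ((-1 : ℝ) * ·) = (fun x : ℝ => -x) := by funext x; ring
    rw [he] at h
    rw [h]
    congr 1
    · ring
    · ext; norm_num
  have hIci : (gaussianReal 0 1) (Set.Ici (-q)) = (gaussianReal 0 1) (Set.Iic q) := by
    conv_lhs => rw [← hneg]
    rw [Measure.map_apply measurable_neg measurableSet_Ici]
    congr 1
    ext x
    simp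
  rw [hIic, hIci, hIic, ← ENNReal.ofReal_add (by linarith) (by linarith)]
  apply ENNReal.ofReal_le_ofReal
  linarith
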